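/- The measure μ with density u ↦ 1/(1+√2-u) on (-∞, 1+√2) is invariant under the octagon Farey map F: the pushforward of μ under F equals μ, i.e. μ(F⁻¹(A)) = μ(A) for every Borel set A ⊆ ℝ. -/

import Mathlib

open MeasureTheory Set
open scoped ENNReal

noncomputable section

/-- The linear fractional transformation of `ℝ` induced by a 2×2 real matrix,
with the convention that the value is `0` when the denominator vanishes. -/
def mob (M : Matrix (Fin 2) (Fin 2) ℝ) (u : ℝ) : ℝ :=
  (M 0 0 * u + M 0 1) / (M 1 0 * u + M 1 1)

/-- The matrix `γ = [[-1, 2+2√2],[0,1]]`. -/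
def gam : Matrix (Fin 2) (Fin 2) ℝ := !![-1, 2 + 2 * Real.sqrt 2; 0, 1]

/-- The isometries `ν₁, …, ν₇` of the octagon. -/
def nu : ℕ → Matrix (Fin 2) (Fin 2) ℝ
  | 1 => (Real.sqrt 2)⁻¹ • !![1, 1; 1, -1]
  | 2 => (Real.sqrt 2)⁻¹ • !![1, 1; -1, 1]
  | 3 => !![0, 1; 1, 0]
  | 4 => !![0, 1; -1, 0]
  | 5 => (Real.sqrt 2)⁻¹ • !![-1, 1; 1, 1]
  | 6 => (Real.sqrt 2)⁻¹ • !![-1, 1; -1, -1]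
  | 7 => !![-1, 0; 0, 1]
  | _ => 1

/-- The index `i` of the sector `Σᵢ` (in inverse-slope coordinates) containing `u`:
`Σ₀ = (1+√2, ∞)`, `Σ₁ = (1, 1+√2]`, `Σ₂ = (√2-1, 1]`, `Σ₃ = (0, √2-1]`, `Σ₄ = (1-√2, 0]`,
`Σ₅ = (-1, 1-√2]`, `Σ₆ = (-1-√2, -1]`, `Σ₇ = (-∞, -1-√2]`. -/
def sectorIndex (u : ℝ) : ℕ :=
  if 1 + Real.sqrt 2 < u then 0
  else if 1 < u then 1
  else if Real.sqrt 2 - 1 < u then 2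
  else if 0 < u then 3
  else if 1 - Real.sqrt 2 < u then 4
  else if -1 < u then 5
  else if -(1 + Real.sqrt 2) < u then 6
  else 7

/-- The octagon Farey map in inverse-slope coordinates: `F(u) = (γ·νᵢ)[u]` for `u ∈ Σᵢ`
(`i = 1,…,7`), and `F(u) = u` for `u ∈ Σ₀`. -/
def F (u : ℝ) : ℝ :=
  if sectorIndex u = 0 then u else mob (gam * nu (sectorIndex u)) u

/-- The measure with density `u ↦ 1/(1+√2-u)` on `(-∞, 1+√2)` and `0` elsewhere. -/
def fareyMeasure : Measure ℝ :=
  volume.withDensity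
    ((Set.Iio (1 + Real.sqrt 2)).indicator fun u => ENNReal.ofReal (1 + Real.sqrt 2 - u)⁻¹)


theorem lintegral_image_deriv {S : Set ℝ} {f f' : ℝ → ℝ} (hs : MeasurableSet S)
    (hf' : ∀ x ∈ S, HasDerivWithinAt f (f' x) S x) (hf : InjOn f S) (g : ℝ → ℝ≥0∞) :
    ∫⁻ x in f '' S, g x = ∫⁻ x in S, ENNReal.ofReal |f' x| * g (f x) := by
  simpa only [ContinuousLinearMap.det_toSpanSingleton] using
    lintegral_image_eq_lintegral_abs_det_fderiv_mul volume hs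
      (fun x hx => (hf' x hx).hasFDerivWithinAt) hf g

theorem hasDerivAt_lfrac (a b c d v : ℝ) (h : c*v+d ≠ 0) :
    HasDerivAt (fun v => (a*v+b)/(c*v+d)) ((a*d-b*c)/(c*v+d)^2) v := by
  have h1 : HasDerivAt (fun v : ℝ => a*v+b) a v := by
    simpa using ((hasDerivAt_id v).const_mul a).add_const b
  have h2 : HasDerivAt (fun v : ℝ => c*v+d) c v := by
    simpa using ((hasDerivAt_id v).const_mul c).add_const d
  convert h1.fun_div h2 h using 1
  any_goals rfl
  ring

theorem comp_eq (a b c d v : ℝ) (hD : -c*v+a ≠ 0) (hdet : a*d - b*c ≠ 0) :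
    (a * ((d*v + -b)/(-c*v + a)) + b) / (c * ((d*v + -b)/(-c*v + a)) + d) = v := by
  have h2 : c * ((d*v + -b)/(-c*v + a)) + d = (a*d - b*c)/(-c*v+a) := by
    rw [mul_div_assoc', div_add' _ _ _ hD]
    congr 1
    ring
  have h3 : a * ((d*v + -b)/(-c*v + a)) + b = (a*d - b*c)*v/(-c*v+a) := by
    rw [mul_div_assoc', div_add' _ _ _ hD]
    congr 1
    ring
  rw [h2, h3]
  rw [div_div_div_cancel_right₀]
  · exact mul_div_cancel_left₀ v hdet
  · exact hD

theorem comp_eq' (a b c d u : ℝ) (hD : c*u+d ≠ 0) (hdet : a*d - b*c ≠ 0) :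
    (d * ((a*u + b)/(c*u + d)) + -b) / (-c * ((a*u + b)/(c*u + d)) + a) = u := by
  have h2 : -c * ((a*u + b)/(c*u + d)) + a = (a*d - b*c)/(c*u+d) := by
    rw [mul_div_assoc', div_add' _ _ _ hD]
    congr 1
    ring
  have h3 : d * ((a*u + b)/(c*u + d)) + -b = (a*d - b*c)*u/(c*u+d) := by
    rw [mul_div_assoc', div_add' _ _ _ hD]
    congr 1
    ring
  rw [h2, h3]
  rw [div_div_div_cancel_right₀]
  · exact mul_div_cancel_left₀ u hdet
  · exact hD

theorem inv_sub_inv'' (x y v : ℝ) (hx : x-v ≠ 0) (hy : y-v ≠ 0) :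
    (x-v)⁻¹ - (y-v)⁻¹ = (y-x)/((x-v)*(y-v)) := by
  rw [inv_eq_one_div, inv_eq_one_div, div_sub_div _ _ hx hy]
  congr 1
  ring

/-- Generic change-of-variables for one inverse branch. -/
theorem branch_transfer (L a b c d : ℝ) (t : ℝ → ℝ) (S : Set ℝ)
    (h1 : ∀ v < L, -c*v+a ≠ 0)
    (h2 : ∀ v < L, (a * ((d*v + -b)/(-c*v + a)) + b) / (c * ((d*v + -b)/(-c*v + a)) + d) = v)
    (h3 : (fun v => (d*v + -b)/(-c*v + a)) '' (Iio L) =ᵐ[volume] S)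
    (h5 : ∀ v < L, |(a*d-b*c)/(-c*v+a)^2| * (L - (d*v + -b)/(-c*v + a))⁻¹ = t v)
    (A : Set ℝ) :
    ∫⁻ u in S, A.indicator (fun _ => (1:ℝ≥0∞)) ((a*u+b)/(c*u+d)) * ENNReal.ofReal ((L-u)⁻¹)
      = ∫⁻ v in Iio L, A.indicator (fun _ => (1:ℝ≥0∞)) v * ENNReal.ofReal (t v) := by
  set φ : ℝ → ℝ := fun v => (d*v + -b)/(-c*v + a) with hφ
  set f : ℝ → ℝ := fun u => (a*u+b)/(c*u+d) with hf
  have h2' : ∀ z ∈ Iio L, f (φ z) = z := fun z hz => h2 z hz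
  have hder : ∀ v ∈ Iio L, HasDerivWithinAt φ ((a*d-b*c)/(-c*v+a)^2) (Iio L) v := by
    intro v hv
    have h := (hasDerivAt_lfrac d (-b) (-c) a v (by simpa using h1 v hv)).hasDerivWithinAt
      (s := Iio L)
    convert h using 1
    any_goals rfl
    ring
  have hinj : InjOn φ (Iio L) := fun x hx y hy hxy => by
    rw [← h2' x hx, hxy, h2' y hy]
  rw [← setLIntegral_congr h3, lintegral_image_deriv measurableSet_Iio hder hinj]
  refine setLIntegral_congr_fun measurableSet_Iio (fun v hv => ?_)
  have : A.indicator (fun _ => (1:ℝ≥0∞)) ((a * φ v + b) / (c * φ v + d))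
      = A.indicator (fun _ => (1:ℝ≥0∞)) v := by rw [h2 v hv]
  rw [this]
  calc ENNReal.ofReal |(a*d-b*c)/(-c*v+a)^2|
        * (A.indicator (fun _ => (1:ℝ≥0∞)) v * ENNReal.ofReal ((L - φ v)⁻¹))
      = A.indicator (fun _ => (1:ℝ≥0∞)) v * (ENNReal.ofReal |(a*d-b*c)/(-c*v+a)^2|
        * ENNReal.ofReal ((L - φ v)⁻¹)) := by ring
    _ = A.indicator (fun _ => (1:ℝ≥0∞)) v
        * ENNReal.ofReal (|(a*d-b*c)/(-c*v+a)^2| * (L - φ v)⁻¹) := by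
          rw [ENNReal.ofReal_mul (abs_nonneg _)]
    _ = A.indicator (fun _ => (1:ℝ≥0∞)) v * ENNReal.ofReal (t v) := by rw [h5 v hv]

theorem branch1 (s : ℝ) (hs0 : 0 < s) (hs : s^2 = 2) (A : Set ℝ) :
    ∫⁻ u in Ioc (1:ℝ) (1+s), A.indicator (fun _ => (1:ℝ≥0∞)) (((1+2*s)*u+(-3-2*s))/((1:ℝ)*u+(-1:ℝ))) * ENNReal.ofReal ((1+s-u)⁻¹)
      = ∫⁻ v in Iio (1+s), A.indicator (fun _ => (1:ℝ≥0∞)) v * ENNReal.ofReal (((1+s)-v)⁻¹ - ((1+2*s)-v)⁻¹) := by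
  have hs1 : 1 < s := by nlinarith
  have hs2 : s < 2 := by nlinarith
  have hdet : (1+2*s)*(-1:ℝ) - (-3-2*s)*(1:ℝ) ≠ 0 := by intro h; nlinarith [hs0]
  have h1 : ∀ v < 1+s, -(1:ℝ)*v+(1+2*s) ≠ 0 := fun v hv => ne_of_gt (by nlinarith [hs, hs0, hs1, hs2, hv])
  refine branch_transfer (1+s) (1+2*s) (-3-2*s) (1:ℝ) (-1:ℝ) (fun v => ((1+s)-v)⁻¹ - ((1+2*s)-v)⁻¹) (Ioc (1:ℝ) (1+s))
    h1 (fun v hv => comp_eq _ _ _ _ v (h1 v hv) hdet) ?_ ?_ A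
  · have himg : (fun v => ((-1:ℝ)*v + -(-3-2*s))/(-(1:ℝ)*v + (1+2*s))) '' (Iio (1+s)) = Ioo (1:ℝ) (1+s) := by
      ext u
      simp only [mem_image, mem_Iio, mem_Ioo]
      constructor
      · rintro ⟨v, hv, rfl⟩
        have hD : (0:ℝ) < (-(1:ℝ)*v + (1+2*s)) := by nlinarith [hs, hs0, hs1, hs2, hv]
        constructor
        · rw [lt_div_iff₀ hD]
          nlinarith [hs, hs0, hs1, hs2, hv, mul_pos hs0 (sub_pos.mpr hv), mul_pos (sub_pos.mpr hs2) (sub_pos.mpr hv), mul_pos (sub_pos.mpr hs1) (sub_pos.mpr hv), mul_pos (show (0:ℝ) < 1+s by linarith) (sub_pos.mpr hv), mul_pos (show (0:ℝ) < 2+s by linarith) (sub_pos.mpr hv)]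
        · rw [div_lt_iff₀ hD]
          nlinarith [hs, hs0, hs1, hs2, hv, mul_pos hs0 (sub_pos.mpr hv), mul_pos (sub_pos.mpr hs2) (sub_pos.mpr hv), mul_pos (sub_pos.mpr hs1) (sub_pos.mpr hv), mul_pos (show (0:ℝ) < 1+s by linarith) (sub_pos.mpr hv), mul_pos (show (0:ℝ) < 2+s by linarith) (sub_pos.mpr hv)]
      · intro hu
        have h1u := hu.1
        have h2u := hu.2
        have hDf : (0:ℝ) < (1:ℝ)*u+(-1:ℝ) := by nlinarith [hs, hs0, hs1, hs2]
        refine ⟨((1+2*s)*u+(-3-2*s))/((1:ℝ)*u+(-1:ℝ)), ?_, comp_eq' (1+2*s) (-3-2*s) (1:ℝ) (-1:ℝ) u (ne_of_gt hDf) hdet⟩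
        rw [div_lt_iff₀ hDf]
        nlinarith [hs, hs0, hs1, hs2, h1u, h2u, mul_pos hs0 (sub_pos.mpr h1u), mul_pos hs0 (sub_pos.mpr h2u), mul_pos (show (0:ℝ) < 1+s by linarith) (sub_pos.mpr h1u), mul_pos (show (0:ℝ) < 1+s by linarith) (sub_pos.mpr h2u), mul_pos (show (0:ℝ) < 2+s by linarith) (sub_pos.mpr h1u), mul_pos (show (0:ℝ) < 2+s by linarith) (sub_pos.mpr h2u)]
    rw [himg]
    exact Ioo_ae_eq_Ioc
  · intro v hv
    beta_reduce
    have hDne : (-(1:ℝ)*v + (1+2*s)) ≠ 0 := h1 v hv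
    have hphi : (1+s) - ((-1:ℝ)*v + -(-3-2*s))/(-(1:ℝ)*v + (1+2*s)) = (s*(1+s-v))/(-(1:ℝ)*v + (1+2*s)) := by
      rw [sub_eq_iff_eq_add, ← add_div, eq_div_iff hDne]
      linear_combination ((1:ℝ)) * hs
    have hx : (0:ℝ) < (1+s) - v := by nlinarith [hs, hs0, hs1, hs2, hv]
    have hy : (0:ℝ) < (1+2*s) - v := by nlinarith [hs, hs0, hs1, hs2, hv]
    have hM : (s*(1+s-v)) ≠ 0 := ne_of_gt (by nlinarith [hs, hs0, hs1, hs2, hv])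
    rw [hphi, show ((1+2*s)*(-1:ℝ) - (-3-2*s)*(1:ℝ) : ℝ) = (2:ℝ) by ring]
    rw [abs_div, abs_pow, sq_abs, show |(2:ℝ)| = (2:ℝ) by norm_num]
    rw [inv_div, div_mul_div_comm, inv_sub_inv'' (1+s) (1+2*s) v (ne_of_gt hx) (ne_of_gt hy)]
    rw [div_eq_div_iff (mul_ne_zero (pow_ne_zero 2 hDne) hM) (mul_ne_zero (ne_of_gt hx) (ne_of_gt hy))]
    linear_combination ((-1:ℝ) + (-5:ℝ)*s + (-8:ℝ)*s^2 + (-4:ℝ)*s^3 + (3:ℝ)*v + (10:ℝ)*v*s + (8:ℝ)*v*s^2 + (-3:ℝ)*v^2 + (-5:ℝ)*v^2*s + (1:ℝ)*v^3) * hs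

theorem branch2 (s : ℝ) (hs0 : 0 < s) (hs : s^2 = 2) (A : Set ℝ) :
    ∫⁻ u in Ioc (s-1) (1:ℝ), A.indicator (fun _ => (1:ℝ≥0∞)) (((-3-2*s)*u+(1+2*s))/((-1:ℝ)*u+(1:ℝ))) * ENNReal.ofReal ((1+s-u)⁻¹)
      = ∫⁻ v in Iio (1+s), A.indicator (fun _ => (1:ℝ≥0∞)) v * ENNReal.ofReal (((3+2*s)-v)⁻¹ - ((3+3*s)-v)⁻¹) := by
  have hs1 : 1 < s := by nlinarith
  have hs2 : s < 2 := by nlinarith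
  have hdet : (-3-2*s)*(1:ℝ) - (1+2*s)*(-1:ℝ) ≠ 0 := by intro h; nlinarith [hs0]
  have h1 : ∀ v < 1+s, -(-1:ℝ)*v+(-3-2*s) ≠ 0 := fun v hv => ne_of_lt (by nlinarith [hs, hs0, hs1, hs2, hv])
  refine branch_transfer (1+s) (-3-2*s) (1+2*s) (-1:ℝ) (1:ℝ) (fun v => ((3+2*s)-v)⁻¹ - ((3+3*s)-v)⁻¹) (Ioc (s-1) (1:ℝ))
    h1 (fun v hv => comp_eq _ _ _ _ v (h1 v hv) hdet) ?_ ?_ A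
  · have himg : (fun v => ((1:ℝ)*v + -(1+2*s))/(-(-1:ℝ)*v + (-3-2*s))) '' (Iio (1+s)) = Ioo (s-1) (1:ℝ) := by
      ext u
      simp only [mem_image, mem_Iio, mem_Ioo]
      constructor
      · rintro ⟨v, hv, rfl⟩
        have hD : (-(-1:ℝ)*v + (-3-2*s)) < (0:ℝ) := by nlinarith [hs, hs0, hs1, hs2, hv]
        constructor
        · rw [lt_div_iff_of_neg hD]
          nlinarith [hs, hs0, hs1, hs2, hv, mul_pos hs0 (sub_pos.mpr hv), mul_pos (sub_pos.mpr hs2) (sub_pos.mpr hv), mul_pos (sub_pos.mpr hs1) (sub_pos.mpr hv), mul_pos (show (0:ℝ) < 1+s by linarith) (sub_pos.mpr hv), mul_pos (show (0:ℝ) < 2+s by linarith) (sub_pos.mpr hv)]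
        · rw [div_lt_iff_of_neg hD]
          nlinarith [hs, hs0, hs1, hs2, hv, mul_pos hs0 (sub_pos.mpr hv), mul_pos (sub_pos.mpr hs2) (sub_pos.mpr hv), mul_pos (sub_pos.mpr hs1) (sub_pos.mpr hv), mul_pos (show (0:ℝ) < 1+s by linarith) (sub_pos.mpr hv), mul_pos (show (0:ℝ) < 2+s by linarith) (sub_pos.mpr hv)]
      · intro hu
        have h1u := hu.1
        have h2u := hu.2
        have hDf : (0:ℝ) < (-1:ℝ)*u+(1:ℝ) := by nlinarith [hs, hs0, hs1, hs2]
        refine ⟨((-3-2*s)*u+(1+2*s))/((-1:ℝ)*u+(1:ℝ)), ?_, comp_eq' (-3-2*s) (1+2*s) (-1:ℝ) (1:ℝ) u (ne_of_gt hDf) hdet⟩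
        rw [div_lt_iff₀ hDf]
        nlinarith [hs, hs0, hs1, hs2, h1u, h2u, mul_pos hs0 (sub_pos.mpr h1u), mul_pos hs0 (sub_pos.mpr h2u), mul_pos (show (0:ℝ) < 1+s by linarith) (sub_pos.mpr h1u), mul_pos (show (0:ℝ) < 1+s by linarith) (sub_pos.mpr h2u), mul_pos (show (0:ℝ) < 2+s by linarith) (sub_pos.mpr h1u), mul_pos (show (0:ℝ) < 2+s by linarith) (sub_pos.mpr h2u)]
    rw [himg]
    exact Ioo_ae_eq_Ioc
  · intro v hv
    beta_reduce
    have hDne : (-(-1:ℝ)*v + (-3-2*s)) ≠ 0 := h1 v hv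
    have hphi : (1+s) - ((1:ℝ)*v + -(1+2*s))/(-(-1:ℝ)*v + (-3-2*s)) = (s*(v-(3+3*s)))/(-(-1:ℝ)*v + (-3-2*s)) := by
      rw [sub_eq_iff_eq_add, ← add_div, eq_div_iff hDne]
      linear_combination ((1:ℝ)) * hs
    have hx : (0:ℝ) < (3+2*s) - v := by nlinarith [hs, hs0, hs1, hs2, hv]
    have hy : (0:ℝ) < (3+3*s) - v := by nlinarith [hs, hs0, hs1, hs2, hv]
    have hM : (s*(v-(3+3*s))) ≠ 0 := ne_of_lt (by nlinarith [hs, hs0, hs1, hs2, hv])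
    rw [hphi, show ((-3-2*s)*(1:ℝ) - (1+2*s)*(-1:ℝ) : ℝ) = (-2:ℝ) by ring]
    rw [abs_div, abs_pow, sq_abs, show |(-2:ℝ)| = (2:ℝ) by norm_num]
    rw [inv_div, div_mul_div_comm, inv_sub_inv'' (3+2*s) (3+3*s) v (ne_of_gt hx) (ne_of_gt hy)]
    rw [div_eq_div_iff (mul_ne_zero (pow_ne_zero 2 hDne) hM) (mul_ne_zero (ne_of_gt hx) (ne_of_gt hy))]
    linear_combination ((27:ℝ) + (63:ℝ)*s + (48:ℝ)*s^2 + (12:ℝ)*s^3 + (-27:ℝ)*v + (-42:ℝ)*v*s + (-16:ℝ)*v*s^2 + (9:ℝ)*v^2 + (7:ℝ)*v^2*s + (-1:ℝ)*v^3) * hs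

theorem branch3 (s : ℝ) (hs0 : 0 < s) (hs : s^2 = 2) (A : Set ℝ) :
    ∫⁻ u in Ioc (0:ℝ) (s-1), A.indicator (fun _ => (1:ℝ≥0∞)) (((2+2*s)*u+(-1:ℝ))/((1:ℝ)*u+(0:ℝ))) * ENNReal.ofReal ((1+s-u)⁻¹)
      = ∫⁻ v in Iio (1+s), A.indicator (fun _ => (1:ℝ≥0∞)) v * ENNReal.ofReal (((3+s)-v)⁻¹ - ((2+2*s)-v)⁻¹) := by
  have hs1 : 1 < s := by nlinarith
  have hs2 : s < 2 := by nlinarith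
  have hdet : (2+2*s)*(0:ℝ) - (-1:ℝ)*(1:ℝ) ≠ 0 := by intro h; nlinarith [hs0]
  have h1 : ∀ v < 1+s, -(1:ℝ)*v+(2+2*s) ≠ 0 := fun v hv => ne_of_gt (by nlinarith [hs, hs0, hs1, hs2, hv])
  refine branch_transfer (1+s) (2+2*s) (-1:ℝ) (1:ℝ) (0:ℝ) (fun v => ((3+s)-v)⁻¹ - ((2+2*s)-v)⁻¹) (Ioc (0:ℝ) (s-1))
    h1 (fun v hv => comp_eq _ _ _ _ v (h1 v hv) hdet) ?_ ?_ A
  · have himg : (fun v => ((0:ℝ)*v + -(-1:ℝ))/(-(1:ℝ)*v + (2+2*s))) '' (Iio (1+s)) = Ioo (0:ℝ) (s-1) := by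
      ext u
      simp only [mem_image, mem_Iio, mem_Ioo]
      constructor
      · rintro ⟨v, hv, rfl⟩
        have hD : (0:ℝ) < (-(1:ℝ)*v + (2+2*s)) := by nlinarith [hs, hs0, hs1, hs2, hv]
        constructor
        · rw [lt_div_iff₀ hD]
          nlinarith [hs, hs0, hs1, hs2, hv, mul_pos hs0 (sub_pos.mpr hv), mul_pos (sub_pos.mpr hs2) (sub_pos.mpr hv), mul_pos (sub_pos.mpr hs1) (sub_pos.mpr hv), mul_pos (show (0:ℝ) < 1+s by linarith) (sub_pos.mpr hv), mul_pos (show (0:ℝ) < 2+s by linarith) (sub_pos.mpr hv)]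
        · rw [div_lt_iff₀ hD]
          nlinarith [hs, hs0, hs1, hs2, hv, mul_pos hs0 (sub_pos.mpr hv), mul_pos (sub_pos.mpr hs2) (sub_pos.mpr hv), mul_pos (sub_pos.mpr hs1) (sub_pos.mpr hv), mul_pos (show (0:ℝ) < 1+s by linarith) (sub_pos.mpr hv), mul_pos (show (0:ℝ) < 2+s by linarith) (sub_pos.mpr hv)]
      · intro hu
        have h1u := hu.1
        have h2u := hu.2
        have hDf : (0:ℝ) < (1:ℝ)*u+(0:ℝ) := by nlinarith [hs, hs0, hs1, hs2]
        refine ⟨((2+2*s)*u+(-1:ℝ))/((1:ℝ)*u+(0:ℝ)), ?_, comp_eq' (2+2*s) (-1:ℝ) (1:ℝ) (0:ℝ) u (ne_of_gt hDf) hdet⟩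
        rw [div_lt_iff₀ hDf]
        nlinarith [hs, hs0, hs1, hs2, h1u, h2u, mul_pos hs0 (sub_pos.mpr h1u), mul_pos hs0 (sub_pos.mpr h2u), mul_pos (show (0:ℝ) < 1+s by linarith) (sub_pos.mpr h1u), mul_pos (show (0:ℝ) < 1+s by linarith) (sub_pos.mpr h2u), mul_pos (show (0:ℝ) < 2+s by linarith) (sub_pos.mpr h1u), mul_pos (show (0:ℝ) < 2+s by linarith) (sub_pos.mpr h2u)]
    rw [himg]
    exact Ioo_ae_eq_Ioc
  · intro v hv
    beta_reduce
    have hDne : (-(1:ℝ)*v + (2+2*s)) ≠ 0 := h1 v hv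
    have hphi : (1+s) - ((0:ℝ)*v + -(-1:ℝ))/(-(1:ℝ)*v + (2+2*s)) = ((1+s)*(3+s-v))/(-(1:ℝ)*v + (2+2*s)) := by
      rw [sub_eq_iff_eq_add, ← add_div, eq_div_iff hDne]
      linear_combination ((1:ℝ)) * hs
    have hx : (0:ℝ) < (3+s) - v := by nlinarith [hs, hs0, hs1, hs2, hv]
    have hy : (0:ℝ) < (2+2*s) - v := by nlinarith [hs, hs0, hs1, hs2, hv]
    have hM : ((1+s)*(3+s-v)) ≠ 0 := ne_of_gt (by nlinarith [hs, hs0, hs1, hs2, hv])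
    rw [hphi, show ((2+2*s)*(0:ℝ) - (-1:ℝ)*(1:ℝ) : ℝ) = (1:ℝ) by ring]
    rw [abs_div, abs_pow, sq_abs, show |(1:ℝ)| = (1:ℝ) by norm_num]
    rw [inv_div, div_mul_div_comm, inv_sub_inv'' (3+s) (2+2*s) v (ne_of_gt hx) (ne_of_gt hy)]
    rw [div_eq_div_iff (mul_ne_zero (pow_ne_zero 2 hDne) hM) (mul_ne_zero (ne_of_gt hx) (ne_of_gt hy))]
    linear_combination ((-12:ℝ) + (-28:ℝ)*s + (-20:ℝ)*s^2 + (-4:ℝ)*s^3 + (16:ℝ)*v + (24:ℝ)*v*s + (8:ℝ)*v*s^2 + (-7:ℝ)*v^2 + (-5:ℝ)*v^2*s + (1:ℝ)*v^3) * hs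

theorem branch4 (s : ℝ) (hs0 : 0 < s) (hs : s^2 = 2) (A : Set ℝ) :
    ∫⁻ u in Ioc (1-s) (0:ℝ), A.indicator (fun _ => (1:ℝ≥0∞)) (((-2-2*s)*u+(-1:ℝ))/((-1:ℝ)*u+(0:ℝ))) * ENNReal.ofReal ((1+s-u)⁻¹)
      = ∫⁻ v in Iio (1+s), A.indicator (fun _ => (1:ℝ≥0∞)) v * ENNReal.ofReal (((2+2*s)-v)⁻¹ - ((1+3*s)-v)⁻¹) := by
  have hs1 : 1 < s := by nlinarith
  have hs2 : s < 2 := by nlinarith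
  have hdet : (-2-2*s)*(0:ℝ) - (-1:ℝ)*(-1:ℝ) ≠ 0 := by intro h; nlinarith [hs0]
  have h1 : ∀ v < 1+s, -(-1:ℝ)*v+(-2-2*s) ≠ 0 := fun v hv => ne_of_lt (by nlinarith [hs, hs0, hs1, hs2, hv])
  refine branch_transfer (1+s) (-2-2*s) (-1:ℝ) (-1:ℝ) (0:ℝ) (fun v => ((2+2*s)-v)⁻¹ - ((1+3*s)-v)⁻¹) (Ioc (1-s) (0:ℝ))
    h1 (fun v hv => comp_eq _ _ _ _ v (h1 v hv) hdet) ?_ ?_ A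
  · have himg : (fun v => ((0:ℝ)*v + -(-1:ℝ))/(-(-1:ℝ)*v + (-2-2*s))) '' (Iio (1+s)) = Ioo (1-s) (0:ℝ) := by
      ext u
      simp only [mem_image, mem_Iio, mem_Ioo]
      constructor
      · rintro ⟨v, hv, rfl⟩
        have hD : (-(-1:ℝ)*v + (-2-2*s)) < (0:ℝ) := by nlinarith [hs, hs0, hs1, hs2, hv]
        constructor
        · rw [lt_div_iff_of_neg hD]
          nlinarith [hs, hs0, hs1, hs2, hv, mul_pos hs0 (sub_pos.mpr hv), mul_pos (sub_pos.mpr hs2) (sub_pos.mpr hv), mul_pos (sub_pos.mpr hs1) (sub_pos.mpr hv), mul_pos (show (0:ℝ) < 1+s by linarith) (sub_pos.mpr hv), mul_pos (show (0:ℝ) < 2+s by linarith) (sub_pos.mpr hv)]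
        · rw [div_lt_iff_of_neg hD]
          nlinarith [hs, hs0, hs1, hs2, hv, mul_pos hs0 (sub_pos.mpr hv), mul_pos (sub_pos.mpr hs2) (sub_pos.mpr hv), mul_pos (sub_pos.mpr hs1) (sub_pos.mpr hv), mul_pos (show (0:ℝ) < 1+s by linarith) (sub_pos.mpr hv), mul_pos (show (0:ℝ) < 2+s by linarith) (sub_pos.mpr hv)]
      · intro hu
        have h1u := hu.1
        have h2u := hu.2
        have hDf : (0:ℝ) < (-1:ℝ)*u+(0:ℝ) := by nlinarith [hs, hs0, hs1, hs2]
        refine ⟨((-2-2*s)*u+(-1:ℝ))/((-1:ℝ)*u+(0:ℝ)), ?_, comp_eq' (-2-2*s) (-1:ℝ) (-1:ℝ) (0:ℝ) u (ne_of_gt hDf) hdet⟩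
        rw [div_lt_iff₀ hDf]
        nlinarith [hs, hs0, hs1, hs2, h1u, h2u, mul_pos hs0 (sub_pos.mpr h1u), mul_pos hs0 (sub_pos.mpr h2u), mul_pos (show (0:ℝ) < 1+s by linarith) (sub_pos.mpr h1u), mul_pos (show (0:ℝ) < 1+s by linarith) (sub_pos.mpr h2u), mul_pos (show (0:ℝ) < 2+s by linarith) (sub_pos.mpr h1u), mul_pos (show (0:ℝ) < 2+s by linarith) (sub_pos.mpr h2u)]
    rw [himg]
    exact Ioo_ae_eq_Ioc
  · intro v hv
    beta_reduce
    have hDne : (-(-1:ℝ)*v + (-2-2*s)) ≠ 0 := h1 v hv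
    have hphi : (1+s) - ((0:ℝ)*v + -(-1:ℝ))/(-(-1:ℝ)*v + (-2-2*s)) = ((1+s)*(v-(1+3*s)))/(-(-1:ℝ)*v + (-2-2*s)) := by
      rw [sub_eq_iff_eq_add, ← add_div, eq_div_iff hDne]
      linear_combination ((1:ℝ)) * hs
    have hx : (0:ℝ) < (2+2*s) - v := by nlinarith [hs, hs0, hs1, hs2, hv]
    have hy : (0:ℝ) < (1+3*s) - v := by nlinarith [hs, hs0, hs1, hs2, hv]
    have hM : ((1+s)*(v-(1+3*s))) ≠ 0 := ne_of_lt (by nlinarith [hs, hs0, hs1, hs2, hv])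
    rw [hphi, show ((-2-2*s)*(0:ℝ) - (-1:ℝ)*(-1:ℝ) : ℝ) = (-1:ℝ) by ring]
    rw [abs_div, abs_pow, sq_abs, show |(-1:ℝ)| = (1:ℝ) by norm_num]
    rw [inv_div, div_mul_div_comm, inv_sub_inv'' (2+2*s) (1+3*s) v (ne_of_gt hx) (ne_of_gt hy)]
    rw [div_eq_div_iff (mul_ne_zero (pow_ne_zero 2 hDne) hM) (mul_ne_zero (ne_of_gt hx) (ne_of_gt hy))]
    linear_combination ((4:ℝ) + (20:ℝ)*s + (28:ℝ)*s^2 + (12:ℝ)*s^3 + (-8:ℝ)*v + (-24:ℝ)*v*s + (-16:ℝ)*v*s^2 + (5:ℝ)*v^2 + (7:ℝ)*v^2*s + (-1:ℝ)*v^3) * hs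

theorem branch5 (s : ℝ) (hs0 : 0 < s) (hs : s^2 = 2) (A : Set ℝ) :
    ∫⁻ u in Ioc (-1:ℝ) (1-s), A.indicator (fun _ => (1:ℝ≥0∞)) (((3+2*s)*u+(1+2*s))/((1:ℝ)*u+(1:ℝ))) * ENNReal.ofReal ((1+s-u)⁻¹)
      = ∫⁻ v in Iio (1+s), A.indicator (fun _ => (1:ℝ≥0∞)) v * ENNReal.ofReal (((1+3*s)-v)⁻¹ - ((3+2*s)-v)⁻¹) := by
  have hs1 : 1 < s := by nlinarith
  have hs2 : s < 2 := by nlinarith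
  have hdet : (3+2*s)*(1:ℝ) - (1+2*s)*(1:ℝ) ≠ 0 := by intro h; nlinarith [hs0]
  have h1 : ∀ v < 1+s, -(1:ℝ)*v+(3+2*s) ≠ 0 := fun v hv => ne_of_gt (by nlinarith [hs, hs0, hs1, hs2, hv])
  refine branch_transfer (1+s) (3+2*s) (1+2*s) (1:ℝ) (1:ℝ) (fun v => ((1+3*s)-v)⁻¹ - ((3+2*s)-v)⁻¹) (Ioc (-1:ℝ) (1-s))
    h1 (fun v hv => comp_eq _ _ _ _ v (h1 v hv) hdet) ?_ ?_ A
  · have himg : (fun v => ((1:ℝ)*v + -(1+2*s))/(-(1:ℝ)*v + (3+2*s))) '' (Iio (1+s)) = Ioo (-1:ℝ) (1-s) := by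
      ext u
      simp only [mem_image, mem_Iio, mem_Ioo]
      constructor
      · rintro ⟨v, hv, rfl⟩
        have hD : (0:ℝ) < (-(1:ℝ)*v + (3+2*s)) := by nlinarith [hs, hs0, hs1, hs2, hv]
        constructor
        · rw [lt_div_iff₀ hD]
          nlinarith [hs, hs0, hs1, hs2, hv, mul_pos hs0 (sub_pos.mpr hv), mul_pos (sub_pos.mpr hs2) (sub_pos.mpr hv), mul_pos (sub_pos.mpr hs1) (sub_pos.mpr hv), mul_pos (show (0:ℝ) < 1+s by linarith) (sub_pos.mpr hv), mul_pos (show (0:ℝ) < 2+s by linarith) (sub_pos.mpr hv)]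
        · rw [div_lt_iff₀ hD]
          nlinarith [hs, hs0, hs1, hs2, hv, mul_pos hs0 (sub_pos.mpr hv), mul_pos (sub_pos.mpr hs2) (sub_pos.mpr hv), mul_pos (sub_pos.mpr hs1) (sub_pos.mpr hv), mul_pos (show (0:ℝ) < 1+s by linarith) (sub_pos.mpr hv), mul_pos (show (0:ℝ) < 2+s by linarith) (sub_pos.mpr hv)]
      · intro hu
        have h1u := hu.1
        have h2u := hu.2
        have hDf : (0:ℝ) < (1:ℝ)*u+(1:ℝ) := by nlinarith [hs, hs0, hs1, hs2]
        refine ⟨((3+2*s)*u+(1+2*s))/((1:ℝ)*u+(1:ℝ)), ?_, comp_eq' (3+2*s) (1+2*s) (1:ℝ) (1:ℝ) u (ne_of_gt hDf) hdet⟩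
        rw [div_lt_iff₀ hDf]
        nlinarith [hs, hs0, hs1, hs2, h1u, h2u, mul_pos hs0 (sub_pos.mpr h1u), mul_pos hs0 (sub_pos.mpr h2u), mul_pos (show (0:ℝ) < 1+s by linarith) (sub_pos.mpr h1u), mul_pos (show (0:ℝ) < 1+s by linarith) (sub_pos.mpr h2u), mul_pos (show (0:ℝ) < 2+s by linarith) (sub_pos.mpr h1u), mul_pos (show (0:ℝ) < 2+s by linarith) (sub_pos.mpr h2u)]
    rw [himg]
    exact Ioo_ae_eq_Ioc
  · intro v hv
    beta_reduce
    have hDne : (-(1:ℝ)*v + (3+2*s)) ≠ 0 := h1 v hv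
    have hphi : (1+s) - ((1:ℝ)*v + -(1+2*s))/(-(1:ℝ)*v + (3+2*s)) = ((2+s)*(1+3*s-v))/(-(1:ℝ)*v + (3+2*s)) := by
      rw [sub_eq_iff_eq_add, ← add_div, eq_div_iff hDne]
      linear_combination ((-1:ℝ)) * hs
    have hx : (0:ℝ) < (1+3*s) - v := by nlinarith [hs, hs0, hs1, hs2, hv]
    have hy : (0:ℝ) < (3+2*s) - v := by nlinarith [hs, hs0, hs1, hs2, hv]
    have hM : ((2+s)*(1+3*s-v)) ≠ 0 := ne_of_gt (by nlinarith [hs, hs0, hs1, hs2, hv])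
    rw [hphi, show ((3+2*s)*(1:ℝ) - (1+2*s)*(1:ℝ) : ℝ) = (2:ℝ) by ring]
    rw [abs_div, abs_pow, sq_abs, show |(2:ℝ)| = (2:ℝ) by norm_num]
    rw [inv_div, div_mul_div_comm, inv_sub_inv'' (1+3*s) (3+2*s) v (ne_of_gt hx) (ne_of_gt hy)]
    rw [div_eq_div_iff (mul_ne_zero (pow_ne_zero 2 hDne) hM) (mul_ne_zero (ne_of_gt hx) (ne_of_gt hy))]
    linear_combination ((9:ℝ) + (39:ℝ)*s + (40:ℝ)*s^2 + (12:ℝ)*s^3 + (-15:ℝ)*v + (-34:ℝ)*v*s + (-16:ℝ)*v*s^2 + (7:ℝ)*v^2 + (7:ℝ)*v^2*s + (-1:ℝ)*v^3) * hs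

theorem branch6 (s : ℝ) (hs0 : 0 < s) (hs : s^2 = 2) (A : Set ℝ) :
    ∫⁻ u in Ioc (-(1+s)) (-1:ℝ), A.indicator (fun _ => (1:ℝ≥0∞)) (((-1-2*s)*u+(-3-2*s))/((-1:ℝ)*u+(-1:ℝ))) * ENNReal.ofReal ((1+s-u)⁻¹)
      = ∫⁻ v in Iio (1+s), A.indicator (fun _ => (1:ℝ≥0∞)) v * ENNReal.ofReal (((1+2*s)-v)⁻¹ - ((3+s)-v)⁻¹) := by
  have hs1 : 1 < s := by nlinarith
  have hs2 : s < 2 := by nlinarith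
  have hdet : (-1-2*s)*(-1:ℝ) - (-3-2*s)*(-1:ℝ) ≠ 0 := by intro h; nlinarith [hs0]
  have h1 : ∀ v < 1+s, -(-1:ℝ)*v+(-1-2*s) ≠ 0 := fun v hv => ne_of_lt (by nlinarith [hs, hs0, hs1, hs2, hv])
  refine branch_transfer (1+s) (-1-2*s) (-3-2*s) (-1:ℝ) (-1:ℝ) (fun v => ((1+2*s)-v)⁻¹ - ((3+s)-v)⁻¹) (Ioc (-(1+s)) (-1:ℝ))
    h1 (fun v hv => comp_eq _ _ _ _ v (h1 v hv) hdet) ?_ ?_ A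
  · have himg : (fun v => ((-1:ℝ)*v + -(-3-2*s))/(-(-1:ℝ)*v + (-1-2*s))) '' (Iio (1+s)) = Ioo (-(1+s)) (-1:ℝ) := by
      ext u
      simp only [mem_image, mem_Iio, mem_Ioo]
      constructor
      · rintro ⟨v, hv, rfl⟩
        have hD : (-(-1:ℝ)*v + (-1-2*s)) < (0:ℝ) := by nlinarith [hs, hs0, hs1, hs2, hv]
        constructor
        · rw [lt_div_iff_of_neg hD]
          nlinarith [hs, hs0, hs1, hs2, hv, mul_pos hs0 (sub_pos.mpr hv), mul_pos (sub_pos.mpr hs2) (sub_pos.mpr hv), mul_pos (sub_pos.mpr hs1) (sub_pos.mpr hv), mul_pos (show (0:ℝ) < 1+s by linarith) (sub_pos.mpr hv), mul_pos (show (0:ℝ) < 2+s by linarith) (sub_pos.mpr hv)]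
        · rw [div_lt_iff_of_neg hD]
          nlinarith [hs, hs0, hs1, hs2, hv, mul_pos hs0 (sub_pos.mpr hv), mul_pos (sub_pos.mpr hs2) (sub_pos.mpr hv), mul_pos (sub_pos.mpr hs1) (sub_pos.mpr hv), mul_pos (show (0:ℝ) < 1+s by linarith) (sub_pos.mpr hv), mul_pos (show (0:ℝ) < 2+s by linarith) (sub_pos.mpr hv)]
      · intro hu
        have h1u := hu.1
        have h2u := hu.2
        have hDf : (0:ℝ) < (-1:ℝ)*u+(-1:ℝ) := by nlinarith [hs, hs0, hs1, hs2]
        refine ⟨((-1-2*s)*u+(-3-2*s))/((-1:ℝ)*u+(-1:ℝ)), ?_, comp_eq' (-1-2*s) (-3-2*s) (-1:ℝ) (-1:ℝ) u (ne_of_gt hDf) hdet⟩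
        rw [div_lt_iff₀ hDf]
        nlinarith [hs, hs0, hs1, hs2, h1u, h2u, mul_pos hs0 (sub_pos.mpr h1u), mul_pos hs0 (sub_pos.mpr h2u), mul_pos (show (0:ℝ) < 1+s by linarith) (sub_pos.mpr h1u), mul_pos (show (0:ℝ) < 1+s by linarith) (sub_pos.mpr h2u), mul_pos (show (0:ℝ) < 2+s by linarith) (sub_pos.mpr h1u), mul_pos (show (0:ℝ) < 2+s by linarith) (sub_pos.mpr h2u)]
    rw [himg]
    exact Ioo_ae_eq_Ioc
  · intro v hv
    beta_reduce
    have hDne : (-(-1:ℝ)*v + (-1-2*s)) ≠ 0 := h1 v hv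
    have hphi : (1+s) - ((-1:ℝ)*v + -(-3-2*s))/(-(-1:ℝ)*v + (-1-2*s)) = ((2+s)*(v-(3+s)))/(-(-1:ℝ)*v + (-1-2*s)) := by
      rw [sub_eq_iff_eq_add, ← add_div, eq_div_iff hDne]
      linear_combination ((-1:ℝ)) * hs
    have hx : (0:ℝ) < (1+2*s) - v := by nlinarith [hs, hs0, hs1, hs2, hv]
    have hy : (0:ℝ) < (3+s) - v := by nlinarith [hs, hs0, hs1, hs2, hv]
    have hM : ((2+s)*(v-(3+s))) ≠ 0 := ne_of_lt (by nlinarith [hs, hs0, hs1, hs2, hv])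
    rw [hphi, show ((-1-2*s)*(-1:ℝ) - (-3-2*s)*(-1:ℝ) : ℝ) = (-2:ℝ) by ring]
    rw [abs_div, abs_pow, sq_abs, show |(-2:ℝ)| = (2:ℝ) by norm_num]
    rw [inv_div, div_mul_div_comm, inv_sub_inv'' (1+2*s) (3+s) v (ne_of_gt hx) (ne_of_gt hy)]
    rw [div_eq_div_iff (mul_ne_zero (pow_ne_zero 2 hDne) hM) (mul_ne_zero (ne_of_gt hx) (ne_of_gt hy))]
    linear_combination ((-3:ℝ) + (-13:ℝ)*s + (-16:ℝ)*s^2 + (-4:ℝ)*s^3 + (7:ℝ)*v + (18:ℝ)*v*s + (8:ℝ)*v*s^2 + (-5:ℝ)*v^2 + (-5:ℝ)*v^2*s + (1:ℝ)*v^3) * hs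

theorem branch7 (s : ℝ) (hs0 : 0 < s) (hs : s^2 = 2) (A : Set ℝ) :
    ∫⁻ u in Iic (-(1+s)), A.indicator (fun _ => (1:ℝ≥0∞)) (((1:ℝ)*u+(2+2*s))/((0:ℝ)*u+(1:ℝ))) * ENNReal.ofReal ((1+s-u)⁻¹)
      = ∫⁻ v in Iio (1+s), A.indicator (fun _ => (1:ℝ≥0∞)) v * ENNReal.ofReal (((3+3*s)-v)⁻¹) := by
  have hs1 : 1 < s := by nlinarith
  have hs2 : s < 2 := by nlinarith
  have hdet : (1:ℝ)*(1:ℝ) - (2+2*s)*(0:ℝ) ≠ 0 := by intro h; nlinarith [hs0]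
  have h1 : ∀ v < 1+s, -(0:ℝ)*v+(1:ℝ) ≠ 0 := fun v hv => ne_of_gt (by nlinarith [hs, hs0, hs1, hs2, hv])
  refine branch_transfer (1+s) (1:ℝ) (2+2*s) (0:ℝ) (1:ℝ) (fun v => ((3+3*s)-v)⁻¹) (Iic (-(1+s)))
    h1 (fun v hv => comp_eq _ _ _ _ v (h1 v hv) hdet) ?_ ?_ A
  · have himg : (fun v => ((1:ℝ)*v + -(2+2*s))/(-(0:ℝ)*v + (1:ℝ))) '' (Iio (1+s)) = Iio (-(1+s)) := by
      ext u
      simp only [mem_image, mem_Iio, mem_Iio]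
      constructor
      · rintro ⟨v, hv, rfl⟩
        have hD : (0:ℝ) < (-(0:ℝ)*v + (1:ℝ)) := by nlinarith [hs, hs0, hs1, hs2, hv]
        rw [div_lt_iff₀ hD]
        nlinarith [hs, hs0, hs1, hs2, hv, mul_pos hs0 (sub_pos.mpr hv), mul_pos (sub_pos.mpr hs2) (sub_pos.mpr hv), mul_pos (sub_pos.mpr hs1) (sub_pos.mpr hv), mul_pos (show (0:ℝ) < 1+s by linarith) (sub_pos.mpr hv), mul_pos (show (0:ℝ) < 2+s by linarith) (sub_pos.mpr hv)]
      · intro hu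
        have hDf : (0:ℝ) < (0:ℝ)*u+(1:ℝ) := by nlinarith [hs, hs0, hs1, hs2]
        refine ⟨((1:ℝ)*u+(2+2*s))/((0:ℝ)*u+(1:ℝ)), ?_, comp_eq' (1:ℝ) (2+2*s) (0:ℝ) (1:ℝ) u (ne_of_gt hDf) hdet⟩
        rw [div_lt_iff₀ hDf]
        nlinarith [hs, hs0, hs1, hs2]
    rw [himg]
    exact Iio_ae_eq_Iic
  · intro v hv
    beta_reduce
    have hDne : (-(0:ℝ)*v + (1:ℝ)) ≠ 0 := h1 v hv
    have hphi : (1+s) - ((1:ℝ)*v + -(2+2*s))/(-(0:ℝ)*v + (1:ℝ)) = ((3+3*s-v))/(-(0:ℝ)*v + (1:ℝ)) := by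
      rw [sub_eq_iff_eq_add, ← add_div, eq_div_iff hDne]
      linear_combination (0) * hs
    rw [hphi]
    rw [show ((1:ℝ)*(1:ℝ) - (2+2*s)*(0:ℝ) : ℝ) = (1:ℝ) by ring]
    rw [show (-(0:ℝ)*v + (1:ℝ)) = (1:ℝ) by ring]
    norm_num

theorem mob_smul (k : ℝ) (hk : k ≠ 0) (M : Matrix (Fin 2) (Fin 2) ℝ) (u : ℝ) :
    mob (k • M) u = mob M u := by
  simp only [mob, Matrix.smul_apply, smul_eq_mul]
  rw [show k * M 0 0 * u + k * M 0 1 = k * (M 0 0 * u + M 0 1) by ring,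
      show k * M 1 0 * u + k * M 1 1 = k * (M 1 0 * u + M 1 1) by ring]
  exact mul_div_mul_left _ _ hk

theorem mob_fin_two (a b c d u : ℝ) : mob !![a,b;c,d] u = (a*u+b)/(c*u+d) := by
  simp [mob, Matrix.cons_val_zero, Matrix.cons_val_one, Matrix.head_cons]

theorem F_on1 (u : ℝ) (hu : u ∈ Ioc (1:ℝ) (1+Real.sqrt 2)) :
    F u = ((1+2*Real.sqrt 2)*u+(-3-2*Real.sqrt 2))/((1:ℝ)*u+(-1:ℝ)) := by
  have hs0 : (0:ℝ) < Real.sqrt 2 := Real.sqrt_pos.mpr (by norm_num)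
  have hs : Real.sqrt 2 ^ 2 = 2 := Real.sq_sqrt (by norm_num)
  have hs1 : 1 < Real.sqrt 2 := by nlinarith
  have hs2 : Real.sqrt 2 < 2 := by nlinarith
  have hu1 := hu.1
  have hu2 := hu.2
  have hsec : sectorIndex u = 1 := by
    unfold sectorIndex
    rw [if_neg (by push_neg; nlinarith), if_pos (by nlinarith)]
  unfold F
  rw [hsec]
  rw [if_neg (by norm_num)]
  have hnu : nu 1 = (Real.sqrt 2)⁻¹ • !![(1:ℝ), 1; 1, -1] := rfl
  rw [hnu, Matrix.mul_smul, mob_smul _ (inv_ne_zero (ne_of_gt hs0)),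
    show gam * !![(1:ℝ), 1; 1, -1] = !![1+2*Real.sqrt 2, -3-2*Real.sqrt 2; (1:ℝ), (-1:ℝ)] by
      ext i j; fin_cases i <;> fin_cases j <;> simp [gam, Matrix.mul_apply, Fin.sum_univ_two] <;> ring, mob_fin_two]

theorem F_on2 (u : ℝ) (hu : u ∈ Ioc (Real.sqrt 2-1) (1:ℝ)) :
    F u = ((-3-2*Real.sqrt 2)*u+(1+2*Real.sqrt 2))/((-1:ℝ)*u+(1:ℝ)) := by
  have hs0 : (0:ℝ) < Real.sqrt 2 := Real.sqrt_pos.mpr (by norm_num)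
  have hs : Real.sqrt 2 ^ 2 = 2 := Real.sq_sqrt (by norm_num)
  have hs1 : 1 < Real.sqrt 2 := by nlinarith
  have hs2 : Real.sqrt 2 < 2 := by nlinarith
  have hu1 := hu.1
  have hu2 := hu.2
  have hsec : sectorIndex u = 2 := by
    unfold sectorIndex
    rw [if_neg (by push_neg; nlinarith), if_neg (by push_neg; nlinarith), if_pos (by nlinarith)]
  unfold F
  rw [hsec]
  rw [if_neg (by norm_num)]
  have hnu : nu 2 = (Real.sqrt 2)⁻¹ • !![(1:ℝ), 1; -1, 1] := rfl
  rw [hnu, Matrix.mul_smul, mob_smul _ (inv_ne_zero (ne_of_gt hs0)),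
    show gam * !![(1:ℝ), 1; -1, 1] = !![-3-2*Real.sqrt 2, 1+2*Real.sqrt 2; (-1:ℝ), (1:ℝ)] by
      ext i j; fin_cases i <;> fin_cases j <;> simp [gam, Matrix.mul_apply, Fin.sum_univ_two] <;> ring, mob_fin_two]

theorem F_on3 (u : ℝ) (hu : u ∈ Ioc (0:ℝ) (Real.sqrt 2-1)) :
    F u = ((2+2*Real.sqrt 2)*u+(-1:ℝ))/((1:ℝ)*u+(0:ℝ)) := by
  have hs0 : (0:ℝ) < Real.sqrt 2 := Real.sqrt_pos.mpr (by norm_num)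
  have hs : Real.sqrt 2 ^ 2 = 2 := Real.sq_sqrt (by norm_num)
  have hs1 : 1 < Real.sqrt 2 := by nlinarith
  have hs2 : Real.sqrt 2 < 2 := by nlinarith
  have hu1 := hu.1
  have hu2 := hu.2
  have hsec : sectorIndex u = 3 := by
    unfold sectorIndex
    rw [if_neg (by push_neg; nlinarith), if_neg (by push_neg; nlinarith), if_neg (by push_neg; nlinarith), if_pos (by nlinarith)]
  unfold F
  rw [hsec]
  rw [if_neg (by norm_num)]
  have hnu : nu 3 = !![(0:ℝ), 1; 1, 0] := rfl
  rw [hnu,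
    show gam * !![(0:ℝ), 1; 1, 0] = !![2+2*Real.sqrt 2, (-1:ℝ); (1:ℝ), (0:ℝ)] by
      ext i j; fin_cases i <;> fin_cases j <;> simp [gam, Matrix.mul_apply, Fin.sum_univ_two] <;> ring, mob_fin_two]

theorem F_on4 (u : ℝ) (hu : u ∈ Ioc (1-Real.sqrt 2) (0:ℝ)) :
    F u = ((-2-2*Real.sqrt 2)*u+(-1:ℝ))/((-1:ℝ)*u+(0:ℝ)) := by
  have hs0 : (0:ℝ) < Real.sqrt 2 := Real.sqrt_pos.mpr (by norm_num)
  have hs : Real.sqrt 2 ^ 2 = 2 := Real.sq_sqrt (by norm_num)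
  have hs1 : 1 < Real.sqrt 2 := by nlinarith
  have hs2 : Real.sqrt 2 < 2 := by nlinarith
  have hu1 := hu.1
  have hu2 := hu.2
  have hsec : sectorIndex u = 4 := by
    unfold sectorIndex
    rw [if_neg (by push_neg; nlinarith), if_neg (by push_neg; nlinarith), if_neg (by push_neg; nlinarith), if_neg (by push_neg; nlinarith), if_pos (by nlinarith)]
  unfold F
  rw [hsec]
  rw [if_neg (by norm_num)]
  have hnu : nu 4 = !![(0:ℝ), 1; -1, 0] := rfl
  rw [hnu,
    show gam * !![(0:ℝ), 1; -1, 0] = !![-2-2*Real.sqrt 2, (-1:ℝ); (-1:ℝ), (0:ℝ)] by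
      ext i j; fin_cases i <;> fin_cases j <;> simp [gam, Matrix.mul_apply, Fin.sum_univ_two] <;> ring, mob_fin_two]

theorem F_on5 (u : ℝ) (hu : u ∈ Ioc (-1:ℝ) (1-Real.sqrt 2)) :
    F u = ((3+2*Real.sqrt 2)*u+(1+2*Real.sqrt 2))/((1:ℝ)*u+(1:ℝ)) := by
  have hs0 : (0:ℝ) < Real.sqrt 2 := Real.sqrt_pos.mpr (by norm_num)
  have hs : Real.sqrt 2 ^ 2 = 2 := Real.sq_sqrt (by norm_num)
  have hs1 : 1 < Real.sqrt 2 := by nlinarith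
  have hs2 : Real.sqrt 2 < 2 := by nlinarith
  have hu1 := hu.1
  have hu2 := hu.2
  have hsec : sectorIndex u = 5 := by
    unfold sectorIndex
    rw [if_neg (by push_neg; nlinarith), if_neg (by push_neg; nlinarith), if_neg (by push_neg; nlinarith), if_neg (by push_neg; nlinarith), if_neg (by push_neg; nlinarith), if_pos (by nlinarith)]
  unfold F
  rw [hsec]
  rw [if_neg (by norm_num)]
  have hnu : nu 5 = (Real.sqrt 2)⁻¹ • !![(-1:ℝ), 1; 1, 1] := rfl
  rw [hnu, Matrix.mul_smul, mob_smul _ (inv_ne_zero (ne_of_gt hs0)),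
    show gam * !![(-1:ℝ), 1; 1, 1] = !![3+2*Real.sqrt 2, 1+2*Real.sqrt 2; (1:ℝ), (1:ℝ)] by
      ext i j; fin_cases i <;> fin_cases j <;> simp [gam, Matrix.mul_apply, Fin.sum_univ_two] <;> ring, mob_fin_two]

theorem F_on6 (u : ℝ) (hu : u ∈ Ioc (-(1+Real.sqrt 2)) (-1:ℝ)) :
    F u = ((-1-2*Real.sqrt 2)*u+(-3-2*Real.sqrt 2))/((-1:ℝ)*u+(-1:ℝ)) := by
  have hs0 : (0:ℝ) < Real.sqrt 2 := Real.sqrt_pos.mpr (by norm_num)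
  have hs : Real.sqrt 2 ^ 2 = 2 := Real.sq_sqrt (by norm_num)
  have hs1 : 1 < Real.sqrt 2 := by nlinarith
  have hs2 : Real.sqrt 2 < 2 := by nlinarith
  have hu1 := hu.1
  have hu2 := hu.2
  have hsec : sectorIndex u = 6 := by
    unfold sectorIndex
    rw [if_neg (by push_neg; nlinarith), if_neg (by push_neg; nlinarith), if_neg (by push_neg; nlinarith), if_neg (by push_neg; nlinarith), if_neg (by push_neg; nlinarith), if_neg (by push_neg; nlinarith), if_pos (by nlinarith)]
  unfold F
  rw [hsec]
  rw [if_neg (by norm_num)]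
  have hnu : nu 6 = (Real.sqrt 2)⁻¹ • !![(-1:ℝ), 1; -1, -1] := rfl
  rw [hnu, Matrix.mul_smul, mob_smul _ (inv_ne_zero (ne_of_gt hs0)),
    show gam * !![(-1:ℝ), 1; -1, -1] = !![-1-2*Real.sqrt 2, -3-2*Real.sqrt 2; (-1:ℝ), (-1:ℝ)] by
      ext i j; fin_cases i <;> fin_cases j <;> simp [gam, Matrix.mul_apply, Fin.sum_univ_two] <;> ring, mob_fin_two]

theorem F_on7 (u : ℝ) (hu : u ∈ Iic (-(1+Real.sqrt 2))) :
    F u = ((1:ℝ)*u+(2+2*Real.sqrt 2))/((0:ℝ)*u+(1:ℝ)) := by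
  have hs0 : (0:ℝ) < Real.sqrt 2 := Real.sqrt_pos.mpr (by norm_num)
  have hs : Real.sqrt 2 ^ 2 = 2 := Real.sq_sqrt (by norm_num)
  have hs1 : 1 < Real.sqrt 2 := by nlinarith
  have hs2 : Real.sqrt 2 < 2 := by nlinarith
  have hu' := mem_Iic.mp hu
  have hsec : sectorIndex u = 7 := by
    unfold sectorIndex
    rw [if_neg (by push_neg; nlinarith), if_neg (by push_neg; nlinarith), if_neg (by push_neg; nlinarith), if_neg (by push_neg; nlinarith), if_neg (by push_neg; nlinarith), if_neg (by push_neg; nlinarith), if_neg (by push_neg; nlinarith)]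
  unfold F
  rw [hsec]
  rw [if_neg (by norm_num)]
  have hnu : nu 7 = !![(-1:ℝ), 0; 0, 1] := rfl
  rw [hnu,
    show gam * !![(-1:ℝ), 0; 0, 1] = !![(1:ℝ), 2+2*Real.sqrt 2; (0:ℝ), (1:ℝ)] by
      ext i j; fin_cases i <;> fin_cases j <;> simp [gam, Matrix.mul_apply, Fin.sum_univ_two] <;> ring, mob_fin_two]

theorem F_eq_pw : F = fun u =>
    if 1 + Real.sqrt 2 < u then u
    else if 1 < u then mob (gam * nu 1) u
    else if Real.sqrt 2 - 1 < u then mob (gam * nu 2) u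
    else if 0 < u then mob (gam * nu 3) u
    else if 1 - Real.sqrt 2 < u then mob (gam * nu 4) u
    else if -1 < u then mob (gam * nu 5) u
    else if -(1 + Real.sqrt 2) < u then mob (gam * nu 6) u
    else mob (gam * nu 7) u := by
  funext u
  unfold F sectorIndex
  split_ifs <;> simp_all

theorem measurable_mob (M : Matrix (Fin 2) (Fin 2) ℝ) : Measurable (mob M) := by
  unfold mob
  exact ((measurable_id.const_mul _).add_const _).div ((measurable_id.const_mul _).add_const _)

theorem measurable_F : Measurable F := by
  rw [F_eq_pw]
  refine Measurable.ite (measurableSet_lt measurable_const measurable_id) measurable_id ?_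
  refine Measurable.ite (measurableSet_lt measurable_const measurable_id) (measurable_mob _) ?_
  refine Measurable.ite (measurableSet_lt measurable_const measurable_id) (measurable_mob _) ?_
  refine Measurable.ite (measurableSet_lt measurable_const measurable_id) (measurable_mob _) ?_
  refine Measurable.ite (measurableSet_lt measurable_const measurable_id) (measurable_mob _) ?_
  refine Measurable.ite (measurableSet_lt measurable_const measurable_id) (measurable_mob _) ?_
  exact Measurable.ite (measurableSet_lt measurable_const measurable_id) (measurable_mob _)
    (measurable_mob _)

/-- The measure with density `1/(1+√2-u)` is invariant under the octagon Farey map. -/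
theorem fareyMeasure_invariant (A : Set ℝ) (hA : MeasurableSet A) :
    fareyMeasure (F ⁻¹' A) = fareyMeasure A := by
  have hs0 : (0:ℝ) < Real.sqrt 2 := Real.sqrt_pos.mpr (by norm_num)
  have hs : Real.sqrt 2 ^ 2 = 2 := Real.sq_sqrt (by norm_num)
  have hs1 : 1 < Real.sqrt 2 := by nlinarith
  have hs2 : Real.sqrt 2 < 2 := by nlinarith
  have hpre : MeasurableSet (F ⁻¹' A) := measurable_F hA
  have hρ : ∀ B : Set ℝ, MeasurableSet B → fareyMeasure B
      = ∫⁻ u in B, (Set.Iio (1 + Real.sqrt 2)).indicator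
          (fun u => ENNReal.ofReal (1 + Real.sqrt 2 - u)⁻¹) u := by
    intro B hB
    rw [fareyMeasure, withDensity_apply _ hB]
  have hIoi0 : fareyMeasure (Ioi (1 + Real.sqrt 2)) = 0 := by
    rw [hρ _ measurableSet_Ioi,
      setLIntegral_congr_fun measurableSet_Ioi (fun u hu =>
        indicator_of_notMem (by simp only [mem_Iio, not_lt]; exact le_of_lt hu) _)]
    exact lintegral_zero
  have hsplit : ∀ (B : Set ℝ) (c d : ℝ), c ≤ d → fareyMeasure (B ∩ Iic d)
      = fareyMeasure (B ∩ Iic c) + fareyMeasure (B ∩ Ioc c d) := by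
    intro B c d hcd
    rw [← measure_inter_add_diff (B ∩ Iic d) (measurableSet_Iic (a := c))]
    congr 1
    · rw [inter_assoc, Iic_inter_Iic, min_eq_right hcd]
    · rw [inter_diff_assoc, Iic_sdiff_Iic]
  have htop : fareyMeasure (F ⁻¹' A) = fareyMeasure (F ⁻¹' A ∩ Iic (1 + Real.sqrt 2))
      + fareyMeasure (F ⁻¹' A ∩ Ioi (1 + Real.sqrt 2)) := by
    rw [← measure_inter_add_diff (F ⁻¹' A) (measurableSet_Iic (a := 1 + Real.sqrt 2))]
    congr 1
    rw [diff_eq, compl_Iic]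
  have esec : ∀ St : Set ℝ, MeasurableSet St → ∀ fab : ℝ → ℝ, (∀ u ∈ St, F u = fab u)
      → (∀ u ∈ St, u ≤ 1 + Real.sqrt 2)
      → fareyMeasure (F ⁻¹' A ∩ St) = ∫⁻ u in St,
          A.indicator (fun _ => (1:ℝ≥0∞)) (fab u) * ENNReal.ofReal ((1 + Real.sqrt 2 - u)⁻¹) := by
    intro St hSt fab hf hle
    classical
    rw [hρ _ (hpre.inter hSt), ← Measure.restrict_restrict hpre, ← lintegral_indicator hpre]
    refine setLIntegral_congr_fun hSt (fun u hu => ?_)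
    have h1 : (Set.Iio (1 + Real.sqrt 2)).indicator
        (fun u => ENNReal.ofReal (1 + Real.sqrt 2 - u)⁻¹) u
        = ENNReal.ofReal ((1 + Real.sqrt 2 - u)⁻¹) := by
      rcases lt_or_eq_of_le (hle u hu) with h | h
      · rw [indicator_of_mem (mem_Iio.mpr h)]
      · rw [indicator_of_notMem (by simp [mem_Iio, h]), h, sub_self, inv_zero,
          ENNReal.ofReal_zero]
    rw [indicator_apply, mem_preimage, hf u hu, h1]
    by_cases hAu : fab u ∈ A
    · rw [if_pos hAu, indicator_of_mem hAu, one_mul]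
    · rw [if_neg hAu, indicator_of_notMem hAu, zero_mul]
  have e1 : fareyMeasure (F ⁻¹' A ∩ Ioc (1:ℝ) (1 + Real.sqrt 2))
      = ∫⁻ v in Iio (1 + Real.sqrt 2), A.indicator (fun _ => (1:ℝ≥0∞)) v
        * ENNReal.ofReal (((1+Real.sqrt 2)-v)⁻¹ - ((1+2*Real.sqrt 2)-v)⁻¹) :=
    (esec _ measurableSet_Ioc _ (fun u hu => F_on1 u hu) (fun u hu => hu.2)).trans
      (branch1 (Real.sqrt 2) hs0 hs A)
  have e2 : fareyMeasure (F ⁻¹' A ∩ Ioc (Real.sqrt 2 - 1) (1:ℝ))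
      = ∫⁻ v in Iio (1 + Real.sqrt 2), A.indicator (fun _ => (1:ℝ≥0∞)) v
        * ENNReal.ofReal (((3+2*Real.sqrt 2)-v)⁻¹ - ((3+3*Real.sqrt 2)-v)⁻¹) :=
    (esec _ measurableSet_Ioc _ (fun u hu => F_on2 u hu)
      (fun u hu => by have := hu.2; linarith)).trans (branch2 (Real.sqrt 2) hs0 hs A)
  have e3 : fareyMeasure (F ⁻¹' A ∩ Ioc (0:ℝ) (Real.sqrt 2 - 1))
      = ∫⁻ v in Iio (1 + Real.sqrt 2), A.indicator (fun _ => (1:ℝ≥0∞)) v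
        * ENNReal.ofReal (((3+Real.sqrt 2)-v)⁻¹ - ((2+2*Real.sqrt 2)-v)⁻¹) :=
    (esec _ measurableSet_Ioc _ (fun u hu => F_on3 u hu)
      (fun u hu => by have := hu.2; linarith)).trans (branch3 (Real.sqrt 2) hs0 hs A)
  have e4 : fareyMeasure (F ⁻¹' A ∩ Ioc (1 - Real.sqrt 2) (0:ℝ))
      = ∫⁻ v in Iio (1 + Real.sqrt 2), A.indicator (fun _ => (1:ℝ≥0∞)) v
        * ENNReal.ofReal (((2+2*Real.sqrt 2)-v)⁻¹ - ((1+3*Real.sqrt 2)-v)⁻¹) :=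
    (esec _ measurableSet_Ioc _ (fun u hu => F_on4 u hu)
      (fun u hu => by have := hu.2; linarith)).trans (branch4 (Real.sqrt 2) hs0 hs A)
  have e5 : fareyMeasure (F ⁻¹' A ∩ Ioc (-1:ℝ) (1 - Real.sqrt 2))
      = ∫⁻ v in Iio (1 + Real.sqrt 2), A.indicator (fun _ => (1:ℝ≥0∞)) v
        * ENNReal.ofReal (((1+3*Real.sqrt 2)-v)⁻¹ - ((3+2*Real.sqrt 2)-v)⁻¹) :=
    (esec _ measurableSet_Ioc _ (fun u hu => F_on5 u hu)
      (fun u hu => by have := hu.2; linarith)).trans (branch5 (Real.sqrt 2) hs0 hs A)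
  have e6 : fareyMeasure (F ⁻¹' A ∩ Ioc (-(1 + Real.sqrt 2)) (-1:ℝ))
      = ∫⁻ v in Iio (1 + Real.sqrt 2), A.indicator (fun _ => (1:ℝ≥0∞)) v
        * ENNReal.ofReal (((1+2*Real.sqrt 2)-v)⁻¹ - ((3+Real.sqrt 2)-v)⁻¹) :=
    (esec _ measurableSet_Ioc _ (fun u hu => F_on6 u hu)
      (fun u hu => by have := hu.2; linarith)).trans (branch6 (Real.sqrt 2) hs0 hs A)
  have e7 : fareyMeasure (F ⁻¹' A ∩ Iic (-(1 + Real.sqrt 2)))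
      = ∫⁻ v in Iio (1 + Real.sqrt 2), A.indicator (fun _ => (1:ℝ≥0∞)) v
        * ENNReal.ofReal (((3+3*Real.sqrt 2)-v)⁻¹) :=
    (esec _ measurableSet_Iic _ (fun u hu => F_on7 u hu)
      (fun u hu => by have := mem_Iic.mp hu; linarith)).trans (branch7 (Real.sqrt 2) hs0 hs A)
  have hind : Measurable (A.indicator (fun _ => (1:ℝ≥0∞))) := measurable_const.indicator hA
  have hmeas2 : ∀ x y : ℝ, Measurable (fun v => A.indicator (fun _ => (1:ℝ≥0∞)) v
      * ENNReal.ofReal ((x-v)⁻¹ - (y-v)⁻¹)) := fun x y =>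
    hind.mul (ENNReal.measurable_ofReal.comp
      (((measurable_const.sub measurable_id).inv).sub ((measurable_const.sub measurable_id).inv)))
  have hmeas1 : ∀ x : ℝ, Measurable (fun v => A.indicator (fun _ => (1:ℝ≥0∞)) v
      * ENNReal.ofReal ((x-v)⁻¹)) := fun x =>
    hind.mul (ENNReal.measurable_ofReal.comp ((measurable_const.sub measurable_id).inv))
  have m7 := hmeas1 (3+3*Real.sqrt 2)
  have m6 := hmeas2 (1+2*Real.sqrt 2) (3+Real.sqrt 2)
  have m5 := hmeas2 (1+3*Real.sqrt 2) (3+2*Real.sqrt 2)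
  have m4 := hmeas2 (2+2*Real.sqrt 2) (1+3*Real.sqrt 2)
  have m3 := hmeas2 (3+Real.sqrt 2) (2+2*Real.sqrt 2)
  have m2 := hmeas2 (3+2*Real.sqrt 2) (3+3*Real.sqrt 2)
  have hkey : ∀ x y : ℝ, ∀ v : ℝ, v < x → x ≤ y → (0:ℝ) ≤ (x-v)⁻¹ - (y-v)⁻¹ := by
    intro x y v h1 h2
    have hx : 0 < x - v := by linarith
    have h3 : (y-v)⁻¹ ≤ (x-v)⁻¹ := by
      apply inv_anti₀ hx
      linarith
    linarith
  have hsum : ∀ v ∈ Iio (1 + Real.sqrt 2),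
      A.indicator (fun _ => (1:ℝ≥0∞)) v * ENNReal.ofReal (((3+3*Real.sqrt 2)-v)⁻¹)
      + A.indicator (fun _ => (1:ℝ≥0∞)) v * ENNReal.ofReal (((1+2*Real.sqrt 2)-v)⁻¹ - ((3+Real.sqrt 2)-v)⁻¹)
      + A.indicator (fun _ => (1:ℝ≥0∞)) v * ENNReal.ofReal (((1+3*Real.sqrt 2)-v)⁻¹ - ((3+2*Real.sqrt 2)-v)⁻¹)
      + A.indicator (fun _ => (1:ℝ≥0∞)) v * ENNReal.ofReal (((2+2*Real.sqrt 2)-v)⁻¹ - ((1+3*Real.sqrt 2)-v)⁻¹)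
      + A.indicator (fun _ => (1:ℝ≥0∞)) v * ENNReal.ofReal (((3+Real.sqrt 2)-v)⁻¹ - ((2+2*Real.sqrt 2)-v)⁻¹)
      + A.indicator (fun _ => (1:ℝ≥0∞)) v * ENNReal.ofReal (((3+2*Real.sqrt 2)-v)⁻¹ - ((3+3*Real.sqrt 2)-v)⁻¹)
      + A.indicator (fun _ => (1:ℝ≥0∞)) v * ENNReal.ofReal (((1+Real.sqrt 2)-v)⁻¹ - ((1+2*Real.sqrt 2)-v)⁻¹)
      = A.indicator (fun _ => (1:ℝ≥0∞)) v * ENNReal.ofReal ((1 + Real.sqrt 2 - v)⁻¹) := by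
    intro v hv
    have hv' : v < 1 + Real.sqrt 2 := hv
    have ht7 : (0:ℝ) ≤ ((3+3*Real.sqrt 2)-v)⁻¹ := inv_nonneg.mpr (by nlinarith)
    have ht6 : (0:ℝ) ≤ ((1+2*Real.sqrt 2)-v)⁻¹ - ((3+Real.sqrt 2)-v)⁻¹ := hkey _ _ v (by nlinarith) (by nlinarith)
    have ht5 : (0:ℝ) ≤ ((1+3*Real.sqrt 2)-v)⁻¹ - ((3+2*Real.sqrt 2)-v)⁻¹ := hkey _ _ v (by nlinarith) (by nlinarith)
    have ht4 : (0:ℝ) ≤ ((2+2*Real.sqrt 2)-v)⁻¹ - ((1+3*Real.sqrt 2)-v)⁻¹ := hkey _ _ v (by nlinarith) (by nlinarith)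
    have ht3 : (0:ℝ) ≤ ((3+Real.sqrt 2)-v)⁻¹ - ((2+2*Real.sqrt 2)-v)⁻¹ := hkey _ _ v (by nlinarith) (by nlinarith)
    have ht2 : (0:ℝ) ≤ ((3+2*Real.sqrt 2)-v)⁻¹ - ((3+3*Real.sqrt 2)-v)⁻¹ := hkey _ _ v (by nlinarith) (by nlinarith)
    have ht1 : (0:ℝ) ≤ ((1+Real.sqrt 2)-v)⁻¹ - ((1+2*Real.sqrt 2)-v)⁻¹ := hkey _ _ v (by nlinarith) (by nlinarith)
    rw [← mul_add, ← mul_add, ← mul_add, ← mul_add, ← mul_add, ← mul_add]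
    congr 1
    rw [← ENNReal.ofReal_add ht7 ht6,
        ← ENNReal.ofReal_add (add_nonneg ht7 ht6) ht5,
        ← ENNReal.ofReal_add (add_nonneg (add_nonneg ht7 ht6) ht5) ht4,
        ← ENNReal.ofReal_add (add_nonneg (add_nonneg (add_nonneg ht7 ht6) ht5) ht4) ht3,
        ← ENNReal.ofReal_add (add_nonneg (add_nonneg (add_nonneg (add_nonneg ht7 ht6) ht5) ht4)
          ht3) ht2,
        ← ENNReal.ofReal_add (add_nonneg (add_nonneg (add_nonneg (add_nonneg (add_nonneg ht7 ht6)
          ht5) ht4) ht3) ht2) ht1]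
    congr 1
    ring
  have hAeq : fareyMeasure A = ∫⁻ v in Iio (1 + Real.sqrt 2),
      A.indicator (fun _ => (1:ℝ≥0∞)) v * ENNReal.ofReal ((1 + Real.sqrt 2 - v)⁻¹) := by
    rw [hρ _ hA, lintegral_indicator measurableSet_Iio,
      Measure.restrict_restrict measurableSet_Iio]
    have heq : (∫⁻ v in Iio (1 + Real.sqrt 2), A.indicator (fun _ => (1:ℝ≥0∞)) v
        * ENNReal.ofReal ((1 + Real.sqrt 2 - v)⁻¹))
        = ∫⁻ v in Iio (1 + Real.sqrt 2),
          A.indicator (fun v => ENNReal.ofReal ((1 + Real.sqrt 2 - v)⁻¹)) v :=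
      setLIntegral_congr_fun measurableSet_Iio (fun v hv => by
        by_cases h : v ∈ A
        · rw [indicator_of_mem h, indicator_of_mem h, one_mul]
        · rw [indicator_of_notMem h, indicator_of_notMem h, zero_mul])
    rw [heq, lintegral_indicator hA, Measure.restrict_restrict hA,
      inter_comm A (Iio (1 + Real.sqrt 2))]
  rw [htop, show fareyMeasure (F ⁻¹' A ∩ Ioi (1 + Real.sqrt 2)) = 0 from
      measure_mono_null inter_subset_right hIoi0, add_zero,
    hsplit _ 1 (1 + Real.sqrt 2) (by linarith),
    hsplit _ (Real.sqrt 2 - 1) 1 (by linarith),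
    hsplit _ 0 (Real.sqrt 2 - 1) (by linarith),
    hsplit _ (1 - Real.sqrt 2) 0 (by linarith),
    hsplit _ (-1) (1 - Real.sqrt 2) (by linarith),
    hsplit _ (-(1 + Real.sqrt 2)) (-1) (by linarith),
    e1, e2, e3, e4, e5, e6, e7, hAeq,
    ← lintegral_add_left m7,
    ← lintegral_add_left (m7.fun_add m6),
    ← lintegral_add_left ((m7.fun_add m6).fun_add m5),
    ← lintegral_add_left (((m7.fun_add m6).fun_add m5).fun_add m4),
    ← lintegral_add_left ((((m7.fun_add m6).fun_add m5).fun_add m4).fun_add m3),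
    ← lintegral_add_left (((((m7.fun_add m6).fun_add m5).fun_add m4).fun_add m3).fun_add m2)]
  exact setLIntegral_congr_fun measurableSet_Iio hsum
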